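/- For any finite simple graph G of order n ≥ 2 and any integer k ≥ Δ(G) + 1, the k-coalition number satisfies C_k(G) = 2, where Δ(G) is the maximum degree of G. -/

import Mathlib

open SimpleGraph

/-- A set `S` is a `k`-dominating set of `G` if every vertex outside `S`
has at least `k` neighbors in `S`. -/
def KDominatingSet {V : Type*} (G : SimpleGraph V) (k : ℕ) (S : Set V) : Prop :=
  ∀ v ∉ S, k ≤ (S ∩ G.neighborSet v).ncard

/-- Two disjoint sets `A` and `B` form a `k`-coalition in `G` if neither is a
`k`-dominating set of `G` but their union is. -/
def KCoalition {V : Type*} (G : SimpleGraph V) (k : ℕ) (A B : Set V) : Prop :=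
  Disjoint A B ∧ ¬ KDominatingSet G k A ∧ ¬ KDominatingSet G k B ∧
    KDominatingSet G k (A ∪ B)

/-- A `k`-coalition partition of `G` is a partition of the vertex set in which every
part is either a `k`-dominating set of cardinality `k` or forms a `k`-coalition with
another part. -/
def KCoalitionPartition {V : Type*} (G : SimpleGraph V) (k : ℕ) (P : Finset (Set V)) : Prop :=
  (∀ A ∈ P, A.Nonempty) ∧
  (P : Set (Set V)).PairwiseDisjoint id ∧
  (⋃ A ∈ P, A) = (Set.univ : Set V) ∧
  ∀ A ∈ P, (KDominatingSet G k A ∧ A.ncard = k) ∨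
    ∃ B ∈ P, B ≠ A ∧ KCoalition G k A B

/-- The `k`-coalition number of `G`: the maximum cardinality of a
`k`-coalition partition of `G`. -/
noncomputable def kCoalitionNumber {V : Type*} (G : SimpleGraph V) (k : ℕ) : ℕ :=
  sSup {n | ∃ P : Finset (Set V), KCoalitionPartition G k P ∧ P.card = n}

lemma kdom_iff_univ {V : Type*} [Fintype V] (G : SimpleGraph V)
    [DecidableRel G.Adj] (k : ℕ) (hk : G.maxDegree + 1 ≤ k) (S : Set V) :
    KDominatingSet G k S ↔ S = Set.univ := by
  constructor
  · intro h
    by_contra hne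
    obtain ⟨v, hv⟩ : ∃ v, v ∉ S := by
      by_contra h'
      push_neg at h'
      exact hne (Set.eq_univ_of_forall h')
    have h1 := h v hv
    have h2 : (S ∩ G.neighborSet v).ncard ≤ (G.neighborSet v).ncard :=
      Set.ncard_le_ncard Set.inter_subset_right (Set.toFinite _)
    have h3 : (G.neighborSet v).ncard = G.degree v := by
      rw [Set.ncard_eq_toFinset_card', ← SimpleGraph.neighborFinset_def]
      rfl
    have h4 := G.degree_le_maxDegree v
    omega
  · rintro rfl
    intro v hv
    exact absurd (Set.mem_univ v) hv

theorem ck_eq_two_of_maxDegree_lt {V : Type*} [Fintype V] (G : SimpleGraph V)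
    [DecidableRel G.Adj] (hn : 2 ≤ Fintype.card V) (k : ℕ)
    (hk : G.maxDegree + 1 ≤ k) :
    kCoalitionNumber G k = 2 := by
  classical
  have hdom := kdom_iff_univ G k hk
  -- a 2-element partition exists
  obtain ⟨a, b, hab⟩ := Fintype.exists_pair_of_one_lt_card hn
  set A : Set V := {a}
  set B : Set V := {a}ᶜ
  have hbB : b ∈ B := hab.symm
  have hAB : A ≠ B := fun h => by
    have : a ∈ B := h ▸ Set.mem_singleton a
    simp [B] at this
  have hP2 : KCoalitionPartition G k ({A, B} : Finset (Set V)) := by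
    refine ⟨?_, ?_, ?_, ?_⟩
    · intro S hS
      simp only [Finset.mem_insert, Finset.mem_singleton] at hS
      rcases hS with rfl | rfl
      · exact ⟨a, rfl⟩
      · exact ⟨b, hbB⟩
    · intro S hS T hT hST
      simp only [Finset.coe_insert, Finset.coe_singleton, Set.mem_insert_iff,
        Set.mem_singleton_iff] at hS hT
      have : Disjoint A B := disjoint_compl_right
      rcases hS with rfl | rfl <;> rcases hT with rfl | rfl <;>
        first
        | exact absurd rfl hST
        | simpa [Function.onFun] using this
        | simpa [Function.onFun] using this.symm
    · simp only [Finset.mem_insert, Finset.mem_singleton, Set.iUnion_iUnion_eq_or_left,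
        Set.iUnion_iUnion_eq_left]
      exact Set.eq_univ_of_forall fun v => by
        by_cases h : v ∈ A
        · exact Set.mem_union_left _ h
        · exact Set.mem_union_right _ h
    · have hAnd : ¬ KDominatingSet G k A := by
        rw [hdom]
        intro h
        have : b ∈ A := h ▸ Set.mem_univ b
        exact hab (this.symm)
      have hBnd : ¬ KDominatingSet G k B := by
        rw [hdom]
        intro h
        have : a ∈ B := h ▸ Set.mem_univ a
        simp [B] at this
      have hUd : KDominatingSet G k (A ∪ B) := by
        rw [hdom]
        exact Set.union_compl_self A
      intro S hS
      simp only [Finset.mem_insert, Finset.mem_singleton] at hS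
      rcases hS with rfl | rfl
      · right
        exact ⟨B, by simp, hAB.symm, disjoint_compl_right, hAnd, hBnd, hUd⟩
      · right
        refine ⟨A, by simp, hAB, disjoint_compl_left, hBnd, hAnd, ?_⟩
        rw [Set.union_comm]; exact hUd
  have hmem : 2 ∈ {n | ∃ P : Finset (Set V), KCoalitionPartition G k P ∧ P.card = n} := by
    refine ⟨{A, B}, hP2, ?_⟩
    rw [Finset.card_insert_of_notMem (by simpa using hAB), Finset.card_singleton]
  -- upper bound: any coalition partition has at most 2 parts
  have hub : ∀ n ∈ {n | ∃ P : Finset (Set V), KCoalitionPartition G k P ∧ P.card = n},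
      n ≤ 2 := by
    rintro n ⟨P, ⟨hne, hdisj, hcov, hstr⟩, rfl⟩
    by_contra hgt
    push_neg at hgt
    -- there are at least 3 parts
    obtain ⟨A', hA'⟩ := Finset.card_pos.mp (by omega : 0 < P.card)
    rcases hstr A' hA' with ⟨hAd, _⟩ | ⟨B', hB', hBA, _, _, _, hUd⟩
    · -- A' = univ, but there is another nonempty part disjoint from it
      rw [hdom] at hAd
      obtain ⟨C, hC, hCA⟩ : ∃ C ∈ P, C ≠ A' := by
        by_contra h'
        push_neg at h'
        have : P ⊆ {A'} := fun x hx => Finset.mem_singleton.mpr (h' x hx)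
        have := Finset.card_le_card this
        simp at this
        omega
      have hd : Disjoint C A' := hdisj hC hA' hCA
      obtain ⟨c, hc⟩ := hne C hC
      exact (Set.disjoint_left.mp hd hc) (hAd ▸ Set.mem_univ c)
    · -- A' ∪ B' = univ, but a third part is disjoint from both
      rw [hdom] at hUd
      obtain ⟨C, hC, hCA, hCB⟩ : ∃ C ∈ P, C ≠ A' ∧ C ≠ B' := by
        by_contra h'
        push_neg at h'
        have : P ⊆ {A', B'} := fun x hx => by
          rcases eq_or_ne x A' with rfl | hx1
          · simp
          · simp [h' x hx hx1]
        have := Finset.card_le_card this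
        have h2 : ({A', B'} : Finset (Set V)).card ≤ 2 := Finset.card_insert_le _ _
        omega
      obtain ⟨c, hc⟩ := hne C hC
      have hcu : c ∈ A' ∪ B' := hUd ▸ Set.mem_univ c
      rcases hcu with hca | hcb
      · exact Set.disjoint_left.mp (hdisj hC hA' hCA) hc hca
      · exact Set.disjoint_left.mp (hdisj hC hB' hCB) hc hcb
  refine le_antisymm (csSup_le ⟨2, hmem⟩ hub) (le_csSup ⟨2, hub⟩ hmem)
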